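/- Let F be an infinite field, n ≥ 2, and I = T_{Z_n}(UT_n(F)^{(-)}) the ideal of Z_n-graded identities of UT_n(F)^{(-)} with its canonical Z_n-grading. Fix variables z_1,…,z_k of nonzero degrees g_1,…,g_k ∈ Z_n with g_1 + ⋯ + g_k ≤ n − 1 (as integers in {1,…,n−1}). If f, g ∈ B_{(g_1,…,g_k)} have the same permutation σ of the indices 2,…,k and V_f ≤_k V_g in the Higman order on finite sequences of k-tuples of nonnegative integers (tuples compared componentwise), then g ∈ ⟨{f} ∪ I⟩, the smallest T_{Z_n}-ideal containing f and I. -/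

import Mathlib

open FreeLieAlgebra

/-- The free `ℤ/n`-graded Lie algebra over `F`: the free Lie algebra on countably many
variables of each homogeneous degree `g : ZMod n`; the variable `(g, i)` is the `i`-th
variable of degree `g`. -/
abbrev FreeGLie (F : Type) [Field F] (n : ℕ) := FreeLieAlgebra F (ZMod n × ℕ)

/-- Homogeneous Lie monomials (bracket words) of degree `g`. -/
inductive HomWord (F : Type) [Field F] (n : ℕ) : ZMod n → FreeGLie F n → Prop
  | of (g : ZMod n) (i : ℕ) : HomWord F n g (FreeLieAlgebra.of F (g, i))
  | bracket {g h : ZMod n} {x y : FreeGLie F n} :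
      HomWord F n g x → HomWord F n h y → HomWord F n (g + h) ⁅x, y⁆

/-- The homogeneous component of degree `g` of the free graded Lie algebra. -/
noncomputable def homComp (F : Type) [Field F] (n : ℕ) (g : ZMod n) : Submodule F (FreeGLie F n) :=
  Submodule.span F {x | HomWord F n g x}

/-- A graded substitution sends each variable of degree `g` to a homogeneous element
of degree `g`; it induces a grading-preserving endomorphism via `FreeLieAlgebra.lift`,
and every grading-preserving endomorphism arises this way. -/
def IsGradedSubst (F : Type) [Field F] (n : ℕ) (s : ZMod n × ℕ → FreeGLie F n) : Prop :=
  ∀ g i, s (g, i) ∈ homComp F n g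

/-- `S` is a `T`-ideal: the carrier of a Lie ideal of the free graded Lie algebra which is
stable under all grading-preserving endomorphisms. -/
structure IsTIdeal (F : Type) [Field F] (n : ℕ) (S : Set (FreeGLie F n)) : Prop where
  isIdeal : ∃ J : LieIdeal F (FreeGLie F n), S = ↑J
  substClosed : ∀ s, IsGradedSubst F n s → ∀ x ∈ S, FreeLieAlgebra.lift F s x ∈ S

/-- The smallest `T`-ideal containing `S`. -/
def TClosure (F : Type) [Field F] (n : ℕ) (S : Set (FreeGLie F n)) : Set (FreeGLie F n) :=
  ⋂₀ {T | IsTIdeal F n T ∧ S ⊆ T}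

/-- The degree-`g` component of the canonical `ZMod n`-grading of `UT_n(F)⁽⁻⁾`:
the span of the matrix units `e_{ij}` with `i ≤ j` and `j - i = g` in `ZMod n`. -/
def Lcomp (F : Type) [Field F] (n : ℕ) (g : ZMod n) : Submodule F (Matrix (Fin n) (Fin n) F) :=
  Submodule.span F {A | ∃ i j : Fin n, i ≤ j ∧ ((j : ℕ) : ZMod n) - ((i : ℕ) : ZMod n) = g ∧
    A = Matrix.single i j 1}

attribute [local instance 100] LieRing.ofAssociativeRing

/-- The set of `ZMod n`-graded identities of `UT_n(F)⁽⁻⁾` (with commutator bracket),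
i.e. the elements of the free graded Lie algebra vanishing under every substitution that
sends each variable of degree `g` into the component `Lcomp F n g`. -/
def gradedId (F : Type) [Field F] (n : ℕ) : Set (FreeGLie F n) :=
  {f | ∀ v : ZMod n × ℕ → Matrix (Fin n) (Fin n) F,
    (∀ g i, v (g, i) ∈ Lcomp F n g) → FreeLieAlgebra.lift F v f = 0}

/-- The left-normed bracket `[x, l₁, l₂, …]`. -/
noncomputable def lnw (F : Type) [Field F] (n : ℕ) (x : FreeGLie F n)
    (l : List (FreeGLie F n)) : FreeGLie F n :=
  l.foldl (fun a b => ⁅a, b⁆) x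

/-- The degree-0 variable `y_i`. -/
noncomputable def yv (F : Type) [Field F] (n : ℕ) (i : ℕ) : FreeGLie F n :=
  FreeLieAlgebra.of F ((0 : ZMod n), i)

/-- The variable `z_j` of nonzero degree `g j` (the `j`-th of the `k+1` fixed variables of
nonzero degree; distinct `j` give distinct variables). -/
noncomputable def zvG (F : Type) [Field F] (n k : ℕ) (g : Fin (k + 1) → ZMod n)
    (j : Fin (k + 1)) : FreeGLie F n :=
  FreeLieAlgebra.of F (g j, j.val)

/-- The block of degree-0 variables `y_off, y_{off+1}, …` with multiplicities given by the
`s`-components of the tuples in the list `p`. -/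
noncomputable def ybT (F : Type) [Field F] (n k : ℕ) (s : Fin (k + 1)) :
    ℕ → List (Fin (k + 1) → ℕ) → List (FreeGLie F n)
  | _, [] => []
  | off, t :: rest => List.replicate (t s) (yv F n off) ++ ybT F n k s (off + 1) rest

/-- The element
`[z₁, a₁⁽¹⁾y₁,…,aₘ⁽¹⁾yₘ, z_{σ(2)}, a₁⁽²⁾y₁,…,aₘ⁽²⁾yₘ, …, z_{σ(k+1)}, a₁⁽ᵏ⁺¹⁾y₁,…,aₘ⁽ᵏ⁺¹⁾yₘ]`
of `B₍g₁,…,g_{k+1}₎`, where the `i`-th entry of the list `p` is the tuple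
`(aᵢ⁽¹⁾, …, aᵢ⁽ᵏ⁺¹⁾)` of exponents of `yᵢ`, so `p` is exactly the sequence `V` attached to
the element. -/
noncomputable def BgEl (F : Type) [Field F] (n k : ℕ) (g : Fin (k + 1) → ZMod n)
    (σ : Equiv.Perm (Fin (k + 1))) (p : List (Fin (k + 1) → ℕ)) : FreeGLie F n :=
  lnw F n (zvG F n k g 0)
    ((List.finRange (k + 1)).flatMap fun s =>
      (if s = 0 then [] else [zvG F n k g (σ s)]) ++ ybT F n k s 0 p)

/-! ### Auxiliary development -/

section Basic

variable (F : Type) [Field F] (n : ℕ)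

lemma gradedId_zero : (0 : FreeGLie F n) ∈ gradedId F n := fun v _ =>
  (FreeLieAlgebra.lift F v).toLinearMap.map_zero

lemma gradedId_add {a b : FreeGLie F n} (ha : a ∈ gradedId F n) (hb : b ∈ gradedId F n) :
    a + b ∈ gradedId F n := fun v hv => by
  have := (FreeLieAlgebra.lift F v).toLinearMap.map_add a b
  rw [LieHom.coe_toLinearMap] at this
  rw [this, ha v hv, hb v hv, add_zero]

lemma gradedId_sub {a b : FreeGLie F n} (ha : a ∈ gradedId F n) (hb : b ∈ gradedId F n) :
    a - b ∈ gradedId F n := fun v hv => by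
  have := (FreeLieAlgebra.lift F v).toLinearMap.map_sub a b
  rw [LieHom.coe_toLinearMap] at this
  rw [this, ha v hv, hb v hv, sub_zero]

lemma gradedId_lie (x : FreeGLie F n) {a : FreeGLie F n} (ha : a ∈ gradedId F n) :
    ⁅x, a⁆ ∈ gradedId F n := fun v hv => by
  rw [LieHom.map_lie, ha v hv, lie_zero]

lemma gradedId_lie' {a : FreeGLie F n} (ha : a ∈ gradedId F n) (x : FreeGLie F n) :
    ⁅a, x⁆ ∈ gradedId F n := fun v hv => by
  rw [LieHom.map_lie, ha v hv, zero_lie]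

lemma lnw_nil (x : FreeGLie F n) : lnw F n x [] = x := rfl

lemma lnw_cons (x a : FreeGLie F n) (l : List (FreeGLie F n)) :
    lnw F n x (a :: l) = lnw F n ⁅x, a⁆ l := rfl

lemma lnw_append (x : FreeGLie F n) (l₁ l₂ : List (FreeGLie F n)) :
    lnw F n x (l₁ ++ l₂) = lnw F n (lnw F n x l₁) l₂ := by
  simp [lnw, List.foldl_append]

lemma lnw_snoc (x : FreeGLie F n) (l : List (FreeGLie F n)) (a : FreeGLie F n) :
    lnw F n x (l ++ [a]) = ⁅lnw F n x l, a⁆ := by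
  rw [lnw_append]; rfl

lemma lnw_sub (a b : FreeGLie F n) (l : List (FreeGLie F n)) :
    lnw F n (a - b) l = lnw F n a l - lnw F n b l := by
  induction l generalizing a b with
  | nil => rfl
  | cons c t ih => rw [lnw_cons, lnw_cons, lnw_cons, sub_lie, ih]

lemma gradedId_lnw {a : FreeGLie F n} (ha : a ∈ gradedId F n) (l : List (FreeGLie F n)) :
    lnw F n a l ∈ gradedId F n := by
  induction l generalizing a with
  | nil => exact ha
  | cons c t ih => exact ih (gradedId_lie' F n ha c)

lemma jacW (w a b : FreeGLie F n) : ⁅⁅w, a⁆, b⁆ - ⁅⁅w, b⁆, a⁆ = ⁅w, ⁅a, b⁆⁆ := by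
  rw [leibniz_lie w a b, ← lie_skew a ⁅w, b⁆]
  abel

lemma lift_lnw (μ : ZMod n × ℕ → FreeGLie F n) (x : FreeGLie F n)
    (l : List (FreeGLie F n)) :
    FreeLieAlgebra.lift F μ (lnw F n x l) =
      lnw F n (FreeLieAlgebra.lift F μ x) (l.map (FreeLieAlgebra.lift F μ)) := by
  induction l generalizing x with
  | nil => rfl
  | cons c t ih =>
    rw [lnw_cons, ih, List.map_cons, lnw_cons, LieHom.map_lie]

/-! Diagonal matrices commute. -/

lemma Lcomp_zero_gen {A : Matrix (Fin n) (Fin n) F}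
    (hA : A ∈ {A : Matrix (Fin n) (Fin n) F | ∃ i j : Fin n, i ≤ j ∧
      ((j : ℕ) : ZMod n) - ((i : ℕ) : ZMod n) = (0 : ZMod n) ∧
      A = Matrix.single i j 1}) :
    ∃ i : Fin n, A = Matrix.single i i 1 := by
  obtain ⟨i, j, hij, hd, rfl⟩ := hA
  haveI : NeZero n := ⟨(Fin.pos i).ne'⟩
  have hji : ((j : ℕ) : ZMod n) = ((i : ℕ) : ZMod n) := sub_eq_zero.mp hd
  have := congrArg ZMod.val hji
  rw [ZMod.val_cast_of_lt j.isLt, ZMod.val_cast_of_lt i.isLt] at this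
  have : j = i := Fin.ext this
  subst this
  exact ⟨j, rfl⟩

lemma Lcomp_zero_comm_gen {x : Matrix (Fin n) (Fin n) F}
    (hx : x ∈ {A : Matrix (Fin n) (Fin n) F | ∃ i j : Fin n, i ≤ j ∧
      ((j : ℕ) : ZMod n) - ((i : ℕ) : ZMod n) = (0 : ZMod n) ∧
      A = Matrix.single i j 1})
    {B : Matrix (Fin n) (Fin n) F} (hB : B ∈ Lcomp F n 0) : x * B = B * x := by
  rw [Lcomp] at hB
  induction hB using Submodule.span_induction with
  | mem y hy =>
    obtain ⟨i, rfl⟩ := Lcomp_zero_gen F n hx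
    obtain ⟨j, rfl⟩ := Lcomp_zero_gen F n hy
    by_cases h : i = j
    · subst h; rfl
    · rw [Matrix.single_mul_single_of_ne (h := h), Matrix.single_mul_single_of_ne (h := Ne.symm h)]
  | zero => simp
  | add y z _ _ h1 h2 => rw [mul_add, add_mul, h1, h2]
  | smul a y _ h1 => rw [mul_smul_comm, smul_mul_assoc, h1]

lemma Lcomp_zero_comm {A B : Matrix (Fin n) (Fin n) F}
    (hA : A ∈ Lcomp F n 0) (hB : B ∈ Lcomp F n 0) : A * B = B * A := by
  rw [Lcomp] at hA
  induction hA using Submodule.span_induction with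
  | mem x hx => exact Lcomp_zero_comm_gen F n hx hB
  | zero => simp
  | add y z _ _ h1 h2 => rw [add_mul, mul_add, h1, h2]
  | smul a y _ h1 => rw [smul_mul_assoc, mul_smul_comm, h1]

lemma ycomm (i j : ℕ) : ⁅yv F n i, yv F n j⁆ ∈ gradedId F n := by
  intro v hv
  rw [yv, yv, LieHom.map_lie, lift_of_apply, lift_of_apply, Ring.lie_def, sub_eq_zero]
  exact Lcomp_zero_comm F n (hv 0 i) (hv 0 j)

end Basic

/-! ### `yIdx` : index lists -/

def yIdx (k : ℕ) (s : Fin (k + 1)) : ℕ → List (Fin (k + 1) → ℕ) → List ℕ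
  | _, [] => []
  | off, t :: rest => List.replicate (t s) off ++ yIdx k s (off + 1) rest

lemma ybT_eq (F : Type) [Field F] (n k : ℕ) (s : Fin (k + 1)) (p : List (Fin (k + 1) → ℕ)) :
    ∀ off, ybT F n k s off p = (yIdx k s off p).map (yv F n) := by
  induction p with
  | nil => intro off; simp [ybT, yIdx]
  | cons t rest ih => intro off; simp [ybT, yIdx, ih]

lemma yIdx_append (k : ℕ) (s : Fin (k + 1)) (u v : List (Fin (k + 1) → ℕ)) :
    ∀ off, yIdx k s off (u ++ v) = yIdx k s off u ++ yIdx k s (off + u.length) v := by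
  induction u with
  | nil => intro off; simp [yIdx]
  | cons t r ih =>
    intro off
    have harith : off + (t :: r).length = (off + 1) + r.length := by
      simp only [List.length_cons]; omega
    rw [harith]
    show List.replicate (t s) off ++ yIdx k s (off + 1) (r ++ v)
        = (List.replicate (t s) off ++ yIdx k s (off + 1) r) ++ yIdx k s ((off + 1) + r.length) v
    rw [ih (off + 1), List.append_assoc]

lemma yIdx_mem (k : ℕ) (s : Fin (k + 1)) (p : List (Fin (k + 1) → ℕ)) :
    ∀ off {x}, x ∈ yIdx k s off p → off ≤ x ∧ x < off + p.length := by
  induction p with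
  | nil => intro off x hx; simp [yIdx] at hx
  | cons t r ih =>
    intro off x hx
    simp only [yIdx, List.mem_append] at hx
    rcases hx with hx | hx
    · have hxe := List.eq_of_mem_replicate hx
      subst hxe
      simp only [List.length_cons]
      omega
    · have h2 := ih (off + 1) hx
      simp only [List.length_cons]
      omega

lemma yIdx_map_succ (k : ℕ) (s : Fin (k + 1)) (p : List (Fin (k + 1) → ℕ)) :
    ∀ off, (yIdx k s off p).map Nat.succ = yIdx k s (off + 1) p := by
  induction p with
  | nil => intro off; simp [yIdx]
  | cons t r ih => intro off; simp [yIdx, ih (off + 1)]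

lemma yIdx_map_shift (k : ℕ) (s : Fin (k + 1)) (u v : List (Fin (k + 1) → ℕ)) :
    (yIdx k s 0 (u ++ v)).map (fun j => if j < u.length then j else j + 1)
      = yIdx k s 0 u ++ yIdx k s (u.length + 1) v := by
  rw [yIdx_append, List.map_append]
  congr 1
  · calc (yIdx k s 0 u).map (fun j => if j < u.length then j else j + 1)
        = (yIdx k s 0 u).map id := by
          apply List.map_congr_left
          intro a ha
          have := (yIdx_mem k s u 0 ha).2
          simp only [id]
          rw [if_pos (by omega)]
      _ = yIdx k s 0 u := List.map_id _
  · rw [zero_add]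
    calc (yIdx k s u.length v).map (fun j => if j < u.length then j else j + 1)
        = (yIdx k s u.length v).map Nat.succ := by
          apply List.map_congr_left
          intro a ha
          have := (yIdx_mem k s v u.length ha).1
          rw [if_neg (by omega)]
      _ = yIdx k s (u.length + 1) v := yIdx_map_succ k s v u.length

/-! ### flatMap congruence -/

lemma flatMapCongr {α β : Type*} {f g : α → List β} :
    ∀ (l : List α), (∀ x ∈ l, f x = g x) → l.flatMap f = l.flatMap g := by
  intro l h
  induction l with
  | nil => rfl
  | cons a t ih =>
    rw [List.flatMap_cons, List.flatMap_cons, h a (by simp),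
      ih (fun x hx => h x (by simp [hx]))]

/-! ### finRange splitting -/

section FinR

variable (k : ℕ)

lemma fr_drop (j : ℕ) (hj : j < k + 1) :
    (List.finRange (k + 1)).drop j = ⟨j, hj⟩ :: (List.finRange (k + 1)).drop (j + 1) := by
  rw [List.drop_eq_getElem_cons (by simpa using hj)]
  congr 1
  apply Fin.ext
  simp [List.getElem_finRange]

lemma fr_take (j : ℕ) (hj : j < k + 1) :
    (List.finRange (k + 1)).take (j + 1) = (List.finRange (k + 1)).take j ++ [⟨j, hj⟩] := by
  rw [List.take_succ]
  congr 1
  rw [List.getElem?_eq_getElem (by simpa using hj)]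
  simp only [Option.toList_some, List.cons.injEq, and_true]
  apply Fin.ext
  simp [List.getElem_finRange]

lemma mem_fr_take {x : Fin (k + 1)} : ∀ {j : ℕ}, x ∈ (List.finRange (k + 1)).take j → x.val < j := by
  intro j
  induction j with
  | zero => simp
  | succ j ih =>
    intro hx
    by_cases hj : j < k + 1
    · rw [fr_take k j hj] at hx
      rcases List.mem_append.mp hx with h | h
      · exact Nat.lt_succ_of_lt (ih h)
      · simp only [List.mem_singleton] at h
        subst h; simp
    · rw [List.take_of_length_le (by simp; omega)] at hx
      have := x.isLt; omega

lemma mem_fr_drop {x : Fin (k + 1)} : ∀ {j : ℕ}, x ∈ (List.finRange (k + 1)).drop j → j ≤ x.val := by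
  intro j
  induction j with
  | zero => intro _; exact Nat.zero_le _
  | succ j ih =>
    intro hx
    by_cases hj : j < k + 1
    · have hd := fr_drop k j hj
      have hx' : x ∈ (List.finRange (k + 1)).drop j := by
        rw [hd]; exact List.mem_cons_of_mem _ hx
      have hj' := ih hx'
      have hnd : ((List.finRange (k + 1)).drop j).Nodup :=
        (List.drop_sublist _ _).nodup (List.nodup_finRange _)
      rw [hd] at hnd
      have hne : x ≠ ⟨j, hj⟩ := by
        intro he; subst he
        exact (List.nodup_cons.mp hnd).1 hx
      have : x.val ≠ j := fun h => hne (Fin.ext h)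
      omega
    · rw [List.drop_eq_nil_of_le (by simp; omega)] at hx
      simp at hx

end FinR

/-! ### Words -/

section Words

variable (F : Type) [Field F] (n k : ℕ) (g : Fin (k + 1) → ZMod n)
  (σ : Equiv.Perm (Fin (k + 1)))

noncomputable def zp (s : Fin (k + 1)) : List (FreeGLie F n) :=
  if s = 0 then [] else [zvG F n k g (σ s)]

noncomputable def blkL (L : Fin (k + 1) → List ℕ) (s : Fin (k + 1)) : List (FreeGLie F n) :=
  zp F n k g σ s ++ (L s).map (yv F n)

noncomputable def listOf (L : Fin (k + 1) → List ℕ) : List (FreeGLie F n) :=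
  (List.finRange (k + 1)).flatMap (blkL F n k g σ L)

noncomputable def Wd (L : Fin (k + 1) → List ℕ) : FreeGLie F n :=
  lnw F n (zvG F n k g 0) (listOf F n k g σ L)

noncomputable def prof (p : List (Fin (k + 1) → ℕ)) : Fin (k + 1) → List ℕ :=
  fun s => yIdx k s 0 p

lemma BgEl_eq (p : List (Fin (k + 1) → ℕ)) :
    BgEl F n k g σ p = Wd F n k g σ (prof k p) := by
  rw [BgEl, Wd, listOf]
  congr 1
  apply flatMapCongr
  intro s _
  simp [blkL, zp, prof, ybT_eq]

noncomputable def Cc (L : Fin (k + 1) → List ℕ) (j : ℕ) : List (FreeGLie F n) :=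
  ((List.finRange (k + 1)).take j).flatMap (blkL F n k g σ L)

noncomputable def Dd (L : Fin (k + 1) → List ℕ) (j : ℕ) : List (FreeGLie F n) :=
  ((List.finRange (k + 1)).drop (j + 1)).flatMap (blkL F n k g σ L)

lemma split_at (L : Fin (k + 1) → List ℕ) (j : Fin (k + 1)) :
    listOf F n k g σ L =
      Cc F n k g σ L j.val ++ (zp F n k g σ j ++ (L j).map (yv F n)) ++ Dd F n k g σ L j.val := by
  unfold listOf Cc Dd
  conv_lhs => rw [← List.take_append_drop j.val (List.finRange (k + 1))]
  rw [List.flatMap_append, fr_drop k j.val j.isLt, List.flatMap_cons]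
  have he : (⟨j.val, j.isLt⟩ : Fin (k + 1)) = j := by apply Fin.ext; rfl
  rw [he]
  simp [blkL, List.append_assoc]

lemma Cc_update (L : Fin (k + 1) → List ℕ) (j : Fin (k + 1)) (X : List ℕ) {c : ℕ}
    (hc : c ≤ j.val) :
    Cc F n k g σ (Function.update L j X) c = Cc F n k g σ L c := by
  apply flatMapCongr
  intro x hx
  have hlt := mem_fr_take k hx
  have hne : x ≠ j := fun h => by subst h; omega
  simp [blkL, Function.update_of_ne hne]

lemma Dd_update (L : Fin (k + 1) → List ℕ) (j : Fin (k + 1)) (X : List ℕ) {c : ℕ}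
    (hc : j.val ≤ c) :
    Dd F n k g σ (Function.update L j X) c = Dd F n k g σ L c := by
  apply flatMapCongr
  intro x hx
  have hge := mem_fr_drop k hx
  have hne : x ≠ j := fun h => by subst h; omega
  simp [blkL, Function.update_of_ne hne]

lemma split_update (L : Fin (k + 1) → List ℕ) (j : Fin (k + 1)) (X : List ℕ) :
    listOf F n k g σ (Function.update L j X) =
      Cc F n k g σ L j.val ++ (zp F n k g σ j ++ X.map (yv F n)) ++ Dd F n k g σ L j.val := by
  rw [split_at F n k g σ _ j, Function.update_self,
    Cc_update F n k g σ L j X (le_refl _), Dd_update F n k g σ L j X (le_refl _)]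

lemma Dd_eq (L : Fin (k + 1) → List ℕ) {j : ℕ} (hj : j + 1 < k + 1) :
    Dd F n k g σ L j = blkL F n k g σ L ⟨j + 1, hj⟩ ++ Dd F n k g σ L (j + 1) := by
  unfold Dd
  rw [fr_drop k (j + 1) hj, List.flatMap_cons]

lemma Cc_succ (L : Fin (k + 1) → List ℕ) {j : ℕ} (hj : j < k + 1) :
    Cc F n k g σ L (j + 1) = Cc F n k g σ L j ++ blkL F n k g σ L ⟨j, hj⟩ := by
  unfold Cc
  rw [fr_take k j hj, List.flatMap_append]
  simp

lemma Dd_last (L : Fin (k + 1) → List ℕ) : Dd F n k g σ L k = [] := by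
  unfold Dd
  rw [List.drop_eq_nil_of_le (by simp)]
  rfl

/-! Swapping `y`'s modulo identities. -/

lemma swap_mem (x : FreeGLie F n) (i j : ℕ) (u v : List (FreeGLie F n)) :
    lnw F n x (u ++ ([yv F n i, yv F n j] ++ v)) -
      lnw F n x (u ++ ([yv F n j, yv F n i] ++ v)) ∈ gradedId F n := by
  have e1 : lnw F n x (u ++ ([yv F n i, yv F n j] ++ v)) =
      lnw F n ⁅⁅lnw F n x u, yv F n i⁆, yv F n j⁆ v := by
    rw [lnw_append]; rfl
  have e2 : lnw F n x (u ++ ([yv F n j, yv F n i] ++ v)) =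
      lnw F n ⁅⁅lnw F n x u, yv F n j⁆, yv F n i⁆ v := by
    rw [lnw_append]; rfl
  rw [e1, e2, ← lnw_sub, jacW]
  exact gradedId_lnw F n (gradedId_lie F n _ (ycomm F n i j)) v

lemma perm_mem (x : FreeGLie F n) :
    ∀ {α α' : List ℕ}, α.Perm α' → ∀ (u v : List (FreeGLie F n)),
      lnw F n x (u ++ α.map (yv F n) ++ v) - lnw F n x (u ++ α'.map (yv F n) ++ v)
        ∈ gradedId F n := by
  intro α α' h
  induction h with
  | nil => intro u v; simpa using gradedId_zero F n
  | cons a _ ih =>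
    intro u v
    have := ih (u ++ [yv F n a]) v
    simpa [List.append_assoc] using this
  | swap a b l =>
    intro u v
    have := swap_mem F n x b a u (l.map (yv F n) ++ v)
    simpa [List.append_assoc] using this
  | trans _ _ ih1 ih2 =>
    intro u v
    have := gradedId_add F n (ih1 u v) (ih2 u v)
    rwa [sub_add_sub_cancel] at this

lemma Wd_update_perm (L : Fin (k + 1) → List ℕ) (j : Fin (k + 1)) {A : List ℕ}
    (h : (L j).Perm A) :
    Wd F n k g σ L - Wd F n k g σ (Function.update L j A) ∈ gradedId F n := by
  unfold Wd
  rw [split_at F n k g σ L j, split_update F n k g σ L j A]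
  have := perm_mem F n (zvG F n k g 0) h
    (Cc F n k g σ L j.val ++ zp F n k g σ j) (Dd F n k g σ L j.val)
  simpa [List.append_assoc] using this

lemma Wd_perm (L L' : Fin (k + 1) → List ℕ) (h : ∀ s, (L s).Perm (L' s)) :
    Wd F n k g σ L - Wd F n k g σ L' ∈ gradedId F n := by
  suffices H : ∀ S : List (Fin (k + 1)), S.Nodup →
      Wd F n k g σ L - Wd F n k g σ (fun s => if s ∈ S then L' s else L s) ∈ gradedId F n by
    have := H (List.finRange (k + 1)) (List.nodup_finRange _)
    simpa [List.mem_finRange] using this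
  intro S hSnd
  induction S with
  | nil => simpa using gradedId_zero F n
  | cons a S ih =>
    have ha : a ∉ S := (List.nodup_cons.mp hSnd).1
    have ihS := ih (List.nodup_cons.mp hSnd).2
    set M : Fin (k + 1) → List ℕ := fun s => if s ∈ S then L' s else L s with hM
    have hMa : M a = L a := by simp [hM, ha]
    have h2 : Wd F n k g σ M - Wd F n k g σ (Function.update M a (L' a)) ∈ gradedId F n := by
      apply Wd_update_perm
      rw [hMa]; exact h a
    have hupd : Function.update M a (L' a) = fun s => if s ∈ a :: S then L' s else L s := by
      funext s
      by_cases hs : s = a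
      · subst hs; rw [Function.update_self]; simp
      · rw [Function.update_of_ne hs]; simp [hM, List.mem_cons, hs]
    rw [← hupd]
    have := gradedId_add F n ihS h2
    rwa [sub_add_sub_cancel] at this

/-! Renaming substitution. -/

noncomputable def renSub (φ : ℕ → ℕ) : ZMod n × ℕ → FreeGLie F n :=
  fun v => if v.1 = 0 then FreeLieAlgebra.of F ((0 : ZMod n), φ v.2) else FreeLieAlgebra.of F v

lemma renSub_graded (φ : ℕ → ℕ) : IsGradedSubst F n (renSub F n φ) := by
  intro d i
  by_cases hd : d = 0
  · subst hd
    simp only [renSub, if_pos rfl]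
    exact Submodule.subset_span (HomWord.of 0 (φ i))
  · simp only [renSub, if_neg hd]
    exact Submodule.subset_span (HomWord.of d i)

lemma lift_renSub_Wd (hg : ∀ j, g j ≠ 0) (φ : ℕ → ℕ) (L : Fin (k + 1) → List ℕ) :
    FreeLieAlgebra.lift F (renSub F n φ) (Wd F n k g σ L) =
      Wd F n k g σ (fun s => (L s).map φ) := by
  unfold Wd listOf
  rw [lift_lnw]
  congr 1
  · show FreeLieAlgebra.lift F (renSub F n φ) (FreeLieAlgebra.of F (g 0, (0 : Fin (k+1)).val)) = _
    rw [lift_of_apply]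
    simp [renSub, hg 0, zvG]
  · rw [List.map_flatMap]
    apply flatMapCongr
    intro s _
    unfold blkL zp
    rw [List.map_append]
    congr 1
    · by_cases hs : s = 0
      · simp [hs]
      · simp only [if_neg hs, List.map_cons, List.map_nil, zvG, lift_of_apply]
        rw [renSub, if_neg (hg (σ s))]
    · rw [List.map_map, List.map_map]
      apply List.map_congr_left
      intro a _
      show FreeLieAlgebra.lift F (renSub F n φ) (yv F n a) = yv F n (φ a)
      rw [yv, lift_of_apply, renSub, if_pos rfl]
      rfl

/-! The `z ↦ [z, y]` substitution. -/

noncomputable def zSub (τ : Fin (k + 1)) (m : ℕ) : ZMod n × ℕ → FreeGLie F n :=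
  fun v => if v = (g τ, τ.val) then ⁅FreeLieAlgebra.of F (g τ, τ.val), yv F n m⁆
    else FreeLieAlgebra.of F v

lemma zSub_graded (τ : Fin (k + 1)) (m : ℕ) : IsGradedSubst F n (zSub F n k g τ m) := by
  intro d i
  by_cases h : ((d, i) : ZMod n × ℕ) = (g τ, τ.val)
  · rw [Prod.mk.injEq] at h
    obtain ⟨hd, hi⟩ := h
    subst hd; subst hi
    simp only [zSub, if_pos rfl]
    have hw : HomWord F n (g τ + 0) ⁅FreeLieAlgebra.of F (g τ, τ.val), yv F n m⁆ := by
      rw [yv]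
      exact HomWord.bracket (HomWord.of (g τ) τ.val) (HomWord.of 0 m)
    rw [add_zero] at hw
    exact Submodule.subset_span hw
  · simp only [zSub, if_neg h]
    exact Submodule.subset_span (HomWord.of d i)

lemma map_zSub_blk (hg : ∀ j, g j ≠ 0) (t : Fin (k + 1)) (m : ℕ)
    (L : Fin (k + 1) → List ℕ) (x : Fin (k + 1)) (hx : x ≠ t) :
    (blkL F n k g σ L x).map (FreeLieAlgebra.lift F (zSub F n k g (σ t) m))
      = blkL F n k g σ L x := by
  unfold blkL zp
  rw [List.map_append]
  congr 1
  · by_cases hx0 : x = 0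
    · simp [hx0]
    · simp only [if_neg hx0, List.map_cons, List.map_nil, zvG, lift_of_apply]
      rw [zSub, if_neg]
      intro he
      rw [Prod.mk.injEq] at he
      exact hx (σ.injective (Fin.ext he.2))
  · rw [List.map_map]
    apply List.map_congr_left
    intro a _
    show FreeLieAlgebra.lift F (zSub F n k g (σ t) m) (yv F n a) = yv F n a
    rw [yv, lift_of_apply, zSub, if_neg]
    intro he
    rw [Prod.mk.injEq] at he
    exact hg (σ t) he.1.symm

lemma lift_zSub_Wd (hg : ∀ j, g j ≠ 0) (hσ : σ 0 = 0) (t : Fin (k + 1)) (ht : t ≠ 0) (m : ℕ)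
    (L : Fin (k + 1) → List ℕ) :
    FreeLieAlgebra.lift F (zSub F n k g (σ t) m) (Wd F n k g σ L) =
      lnw F n (zvG F n k g 0)
        (Cc F n k g σ L t.val ++ ([⁅zvG F n k g (σ t), yv F n m⁆] ++ (L t).map (yv F n))
          ++ Dd F n k g σ L t.val) := by
  unfold Wd
  rw [split_at F n k g σ L t, lift_lnw]
  congr 1
  · show FreeLieAlgebra.lift F (zSub F n k g (σ t) m)
      (FreeLieAlgebra.of F (g 0, (0 : Fin (k+1)).val)) = _
    rw [lift_of_apply, zSub, if_neg]
    · rw [zvG]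
    · intro he
      rw [Prod.mk.injEq] at he
      exact ht (σ.injective (show σ t = σ 0 from by rw [hσ]; exact Fin.ext he.2.symm))
  · rw [List.map_append, List.map_append]
    congr 1
    · congr 1
      · unfold Cc
        rw [List.map_flatMap]
        apply flatMapCongr
        intro x hx
        have hlt := mem_fr_take k hx
        exact map_zSub_blk F n k g σ hg t m L x (fun h => by subst h; omega)
      · rw [List.map_append]
        congr 1
        · rw [zp, if_neg ht]
          simp only [List.map_cons, List.map_nil, zvG, lift_of_apply]
          rw [zSub, if_pos rfl]
        · rw [List.map_map]
          apply List.map_congr_left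
          intro a _
          show FreeLieAlgebra.lift F (zSub F n k g (σ t) m) (yv F n a) = yv F n a
          rw [yv, lift_of_apply, zSub, if_neg]
          intro he
          rw [Prod.mk.injEq] at he
          exact hg (σ t) he.1.symm
    · unfold Dd
      rw [List.map_flatMap]
      apply flatMapCongr
      intro x hx
      have hge := mem_fr_drop k hx
      exact map_zSub_blk F n k g σ hg t m L x (fun h => by subst h; omega)

end Words

/-! ### The insertion machinery inside a `T`-ideal -/

section Insert

variable (F : Type) [Field F] (n k : ℕ) (g : Fin (k + 1) → ZMod n)
  (σ : Equiv.Perm (Fin (k + 1))) (J : LieIdeal F (FreeGLie F n))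
  (hg : ∀ j, g j ≠ 0) (hσ : σ 0 = 0)
  (hI : gradedId F n ⊆ (J : Set (FreeGLie F n)))
  (hS : ∀ μ, IsGradedSubst F n μ → ∀ x ∈ (J : Set (FreeGLie F n)),
    FreeLieAlgebra.lift F μ x ∈ (J : Set (FreeGLie F n)))

include hg hσ hI hS

lemma insert_one :
    ∀ (d : ℕ) (s : Fin (k + 1)), k - s.val = d → ∀ (L : Fin (k + 1) → List ℕ) (m : ℕ),
      Wd F n k g σ L ∈ J → Wd F n k g σ (Function.update L s (L s ++ [m])) ∈ J := by
  intro d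
  induction d with
  | zero =>
    intro s hs L m hL
    have hsk : s.val = k := by have := s.isLt; omega
    have hDd : Dd F n k g σ L s.val = [] := by rw [hsk]; exact Dd_last F n k g σ L
    have heq : Wd F n k g σ (Function.update L s (L s ++ [m])) = ⁅Wd F n k g σ L, yv F n m⁆ := by
      unfold Wd
      rw [split_update F n k g σ L s, split_at F n k g σ L s, hDd, List.map_append]
      simp only [List.map_cons, List.map_nil, List.append_nil, ← List.append_assoc]
      rw [lnw_snoc]
    rw [heq, ← lie_skew]
    exact neg_mem (J.lie_mem hL)
  | succ d ih =>
    intro s hs L m hL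
    have hsk : s.val + 1 < k + 1 := by have := s.isLt; omega
    set t : Fin (k + 1) := ⟨s.val + 1, hsk⟩ with htdef
    have ht0 : t ≠ 0 := by
      intro he
      have : t.val = 0 := by rw [he]; rfl
      simp [htdef] at this
    -- apply the substitution z_{σ t} ↦ [z_{σ t}, y_m]
    have h1 : FreeLieAlgebra.lift F (zSub F n k g (σ t) m) (Wd F n k g σ L)
        ∈ (J : Set (FreeGLie F n)) := hS _ (zSub_graded F n k g (σ t) m) _ hL
    rw [lift_zSub_Wd F n k g σ hg hσ t ht0 m L] at h1
    set head := zvG F n k g 0 with hhead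
    set A := Cc F n k g σ L t.val with hA
    set D := Dd F n k g σ L t.val with hD
    set ys := (L t).map (yv F n) with hys
    set zℓ := zvG F n k g (σ t) with hzl
    set ym := yv F n m with hym
    -- the substituted word equals X - Y
    have hsubst : lnw F n head (A ++ ([⁅zℓ, ym⁆] ++ ys) ++ D) =
        lnw F n head (A ++ ([zℓ, ym] ++ ys) ++ D) -
          lnw F n head (A ++ ([ym, zℓ] ++ ys) ++ D) := by
      simp only [← List.append_assoc]
      simp only [lnw_append]
      have hmid : lnw F n (lnw F n head A) [⁅zℓ, ym⁆] =
          lnw F n (lnw F n head A) [zℓ, ym] - lnw F n (lnw F n head A) [ym, zℓ] :=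
        (jacW F n (lnw F n head A) zℓ ym).symm
      rw [hmid, lnw_sub, lnw_sub]
    -- X is the word with m inserted at the head of block t
    have hX : lnw F n head (A ++ ([zℓ, ym] ++ ys) ++ D) =
        Wd F n k g σ (Function.update L t (m :: L t)) := by
      unfold Wd
      rw [split_update F n k g σ L t]
      rw [zp, if_neg ht0]
      simp only [List.map_cons, ← hhead, ← hA, ← hD, ← hys, ← hzl, ← hym, List.append_assoc,
        List.cons_append, List.singleton_append, List.nil_append]
    -- Y is the word with m inserted at the end of block s
    have hY : lnw F n head (A ++ ([ym, zℓ] ++ ys) ++ D) =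
        Wd F n k g σ (Function.update L s (L s ++ [m])) := by
      unfold Wd
      rw [split_update F n k g σ L s]
      have hCc : A = Cc F n k g σ L s.val ++ (zp F n k g σ s ++ (L s).map (yv F n)) := by
        rw [hA]
        show Cc F n k g σ L (s.val + 1) = _
        rw [Cc_succ F n k g σ L s.isLt]
        have : (⟨s.val, s.isLt⟩ : Fin (k + 1)) = s := by apply Fin.ext; rfl
        rw [this, blkL]
      have hDd : Dd F n k g σ L s.val = ([zℓ] ++ ys) ++ D := by
        rw [Dd_eq F n k g σ L hsk, blkL, zp, if_neg ht0]
      rw [hCc, hDd, List.map_append]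
      simp only [List.map_cons, List.map_nil, ← hhead, ← hym, List.append_assoc, List.cons_append,
        List.singleton_append, List.nil_append]
    rw [hsubst, hX, hY] at h1
    -- X ∈ J via the inductive hypothesis and a permutation
    have htval : k - t.val = d := by simp [htdef]; omega
    have hX' : Wd F n k g σ (Function.update L t (L t ++ [m])) ∈ J :=
      ih t htval L m hL
    have hXperm : Wd F n k g σ (Function.update L t (m :: L t)) -
        Wd F n k g σ (Function.update L t (L t ++ [m])) ∈ gradedId F n := by
      have hupd : Function.update (Function.update L t (m :: L t)) t (L t ++ [m]) =
          Function.update L t (L t ++ [m]) := by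
        rw [Function.update_idem]
      have := Wd_update_perm F n k g σ (Function.update L t (m :: L t)) t
        (A := L t ++ [m]) (by rw [Function.update_self]; exact (List.perm_append_singleton m (L t)).symm)
      rwa [hupd] at this
    have hXJ : Wd F n k g σ (Function.update L t (m :: L t)) ∈ J := by
      have := add_mem (hI hXperm) hX'
      rwa [sub_add_cancel] at this
    -- conclude
    have : Wd F n k g σ (Function.update L t (m :: L t)) -
        (Wd F n k g σ (Function.update L t (m :: L t)) -
          Wd F n k g σ (Function.update L s (L s ++ [m]))) ∈ J :=
      sub_mem hXJ h1
    rwa [sub_sub_cancel] at this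

lemma insert_rep (s : Fin (k + 1)) (m : ℕ) :
    ∀ (d : ℕ) (L : Fin (k + 1) → List ℕ), Wd F n k g σ L ∈ J →
      Wd F n k g σ (Function.update L s (L s ++ List.replicate d m)) ∈ J := by
  intro d
  induction d with
  | zero =>
    intro L hL
    simpa [Function.update_eq_self] using hL
  | succ d ihd =>
    intro L hL
    have h1 := ihd L hL
    have h2 := insert_one F n k g σ J hg hσ hI hS (k - s.val) s rfl
      (Function.update L s (L s ++ List.replicate d m)) m h1
    have heq : Function.update (Function.update L s (L s ++ List.replicate d m)) s
        ((Function.update L s (L s ++ List.replicate d m)) s ++ [m]) =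
        Function.update L s (L s ++ List.replicate (d + 1) m) := by
      rw [Function.update_self, Function.update_idem, List.append_assoc,
        ← List.replicate_succ' ]
    rwa [heq] at h2

lemma insert_all (m : ℕ) (c : Fin (k + 1) → ℕ) (L : Fin (k + 1) → List ℕ)
    (hL : Wd F n k g σ L ∈ J) :
    Wd F n k g σ (fun s => L s ++ List.replicate (c s) m) ∈ J := by
  suffices H : ∀ S : List (Fin (k + 1)), S.Nodup →
      Wd F n k g σ (fun s => L s ++ List.replicate (if s ∈ S then c s else 0) m) ∈ J by
    have := H (List.finRange (k + 1)) (List.nodup_finRange _)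
    simpa [List.mem_finRange] using this
  intro S hSnd
  induction S with
  | nil => simpa using hL
  | cons a S ih =>
    have ha : a ∉ S := (List.nodup_cons.mp hSnd).1
    have h1 := ih (List.nodup_cons.mp hSnd).2
    have h2 := insert_rep F n k g σ J hg hσ hI hS a m (c a) _ h1
    have heq : Function.update (fun s => L s ++ List.replicate (if s ∈ S then c s else 0) m) a
        ((fun s => L s ++ List.replicate (if s ∈ S then c s else 0) m) a
          ++ List.replicate (c a) m) =
        fun s => L s ++ List.replicate (if s ∈ a :: S then c s else 0) m := by
      funext s
      by_cases hs : s = a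
      · subst hs
        rw [Function.update_self]
        simp [ha]
      · rw [Function.update_of_ne hs]
        simp [List.mem_cons, hs]
    rwa [heq] at h2

/-! ### The two elementary steps on profiles -/

lemma memJ_of_perm {L L' : Fin (k + 1) → List ℕ} (h : ∀ s, (L s).Perm (L' s))
    (hL : Wd F n k g σ L ∈ J) : Wd F n k g σ L' ∈ J := by
  have hp := Wd_perm F n k g σ L L' h
  have := sub_mem hL (hI hp)
  simpa using this

lemma stepA {u v : List (Fin (k + 1) → ℕ)} {a b : Fin (k + 1) → ℕ} (hab : ∀ s, a s ≤ b s)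
    (h : Wd F n k g σ (prof k (u ++ a :: v)) ∈ J) :
    Wd F n k g σ (prof k (u ++ b :: v)) ∈ J := by
  have h1 := insert_all F n k g σ J hg hσ hI hS u.length (fun s => b s - a s) _ h
  apply memJ_of_perm F n k g σ J hg hσ hI hS _ h1
  intro s
  show (yIdx k s 0 (u ++ a :: v) ++ List.replicate (b s - a s) u.length).Perm
    (yIdx k s 0 (u ++ b :: v))
  rw [yIdx_append, yIdx_append, zero_add]
  show (yIdx k s 0 u ++ (List.replicate (a s) u.length ++ yIdx k s (u.length + 1) v)
        ++ List.replicate (b s - a s) u.length).Perm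
    (yIdx k s 0 u ++ (List.replicate (b s) u.length ++ yIdx k s (u.length + 1) v))
  have hba := hab s
  have hb : List.replicate (b s) u.length =
      List.replicate (a s) u.length ++ List.replicate (b s - a s) u.length := by
    rw [← List.replicate_add]
    congr 1
    omega
  rw [hb]
  simp only [List.append_assoc]
  exact List.Perm.append_left _ (List.Perm.append_left _ List.perm_append_comm)

lemma stepB {u v : List (Fin (k + 1) → ℕ)} (t : Fin (k + 1) → ℕ)
    (h : Wd F n k g σ (prof k (u ++ v)) ∈ J) :
    Wd F n k g σ (prof k (u ++ t :: v)) ∈ J := by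
  have h1 := hS (renSub F n (fun j => if j < u.length then j else j + 1))
    (renSub_graded F n _) _ h
  rw [lift_renSub_Wd F n k g σ hg _ _] at h1
  have heq : (fun s => (prof k (u ++ v) s).map (fun j => if j < u.length then j else j + 1)) =
      fun s : Fin (k+1) => yIdx k s 0 u ++ yIdx k s (u.length + 1) v := by
    funext s
    exact yIdx_map_shift k s u v
  rw [heq] at h1
  have h2 := insert_all F n k g σ J hg hσ hI hS u.length t _ h1
  apply memJ_of_perm F n k g σ J hg hσ hI hS _ h2
  intro s
  show ((yIdx k s 0 u ++ yIdx k s (u.length + 1) v) ++ List.replicate (t s) u.length).Perm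
    (yIdx k s 0 (u ++ t :: v))
  rw [yIdx_append, zero_add]
  show _root_.List.Perm _ (yIdx k s 0 u ++ (List.replicate (t s) u.length ++ yIdx k s (u.length + 1) v))
  simp only [List.append_assoc]
  apply List.Perm.append_left
  exact List.perm_append_comm

lemma pad (l : List (Fin (k + 1) → ℕ)) :
    ∀ (u : List (Fin (k + 1) → ℕ)), Wd F n k g σ (prof k u) ∈ J →
      Wd F n k g σ (prof k (u ++ l)) ∈ J := by
  induction l with
  | nil => intro u hu; simpa using hu
  | cons t l ih =>
    intro u hu
    have h1 : Wd F n k g σ (prof k (u ++ [t])) ∈ J := by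
      have := stepB F n k g σ J hg hσ hI hS (u := u) (v := []) t (by simpa using hu)
      exact this
    have := ih (u ++ [t]) h1
    rwa [List.append_assoc] at this
    

lemma main_sub : ∀ {p q : List (Fin (k + 1) → ℕ)}, List.SublistForall₂ (· ≤ ·) p q →
    ∀ u, Wd F n k g σ (prof k (u ++ p)) ∈ J → Wd F n k g σ (prof k (u ++ q)) ∈ J := by
  intro p q h
  induction h with
  | nil =>
    intro u hu
    apply pad F n k g σ J hg hσ hI hS
    simpa using hu
  | @cons a b l₁ l₂ hab hsl ih =>
    intro u hu
    have h1 : Wd F n k g σ (prof k (u ++ b :: l₁)) ∈ J :=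
      stepA F n k g σ J hg hσ hI hS (fun s => hab s) hu
    rw [List.append_cons] at h1
    have h2 := ih (u ++ [b]) h1
    rwa [← List.append_cons] at h2
  | @cons_right b l₁ l₂ hsl ih =>
    intro u hu
    exact stepB F n k g σ J hg hσ hI hS b (ih u hu)

end Insert

/-- Fix variables `z₁,…,z_{k+1}` of nonzero degrees `g₁,…,g_{k+1}` with
`g₁ + ⋯ + g_{k+1} ≤ n - 1` (as integers in `{1,…,n-1}`). If `f, g ∈ B₍g₁,…,g_{k+1}₎` have
the same permutation `σ` (with `σ(1) = 1`) and `V_f ≤_k V_g` in the Higman order on finite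
sequences of tuples of nonnegative integers (tuples compared componentwise), then `g` lies
in the smallest `T`-ideal containing `f` and the ideal `I` of `ZMod n`-graded identities of
`UT_n(F)⁽⁻⁾`. -/
theorem stmt14 (F : Type) [Field F] [Infinite F] (n k : ℕ) (hn : 2 ≤ n)
    (g : Fin (k + 1) → ZMod n) (hg : ∀ j, g j ≠ 0) (hsum : ∑ j, (g j).val ≤ n - 1)
    (σ : Equiv.Perm (Fin (k + 1))) (hσ : σ 0 = 0)
    (p q : List (Fin (k + 1) → ℕ)) (hpq : List.SublistForall₂ (· ≤ ·) p q) :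
    BgEl F n k g σ q ∈ TClosure F n ({BgEl F n k g σ p} ∪ gradedId F n) := by
  apply Set.mem_sInter.mpr
  rintro T ⟨hTid, hST⟩
  obtain ⟨J, rfl⟩ := hTid.isIdeal
  have hSub := hTid.substClosed
  have hf : BgEl F n k g σ p ∈ (J : Set (FreeGLie F n)) :=
    hST (Set.mem_union_left _ rfl)
  have hI : gradedId F n ⊆ (J : Set (FreeGLie F n)) := fun x hx =>
    hST (Set.mem_union_right _ hx)
  rw [BgEl_eq] at hf ⊢
  have hmain := main_sub F n k g σ J hg hσ hI hSub hpq [] (by simpa using hf)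
  simpa using hmain
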